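/- In the Knapsack-reduction triangle gadget, an optimal attack never removes both edges {u_{i-1}, ω_i} and {ω_i, u_i} of the same triangle: removing both increases attack cost without eliminating any additional s–t path competing with p*. -/

import Mathlib

open SimpleGraph

/-- Length of a walk with respect to edge weights `w`. -/
noncomputable def walkLen {V : Type*} {G : SimpleGraph V} (w : Sym2 V → ℝ) {s t : V}
    (p : G.Walk s t) : ℝ := (p.edges.map w).sum

/-- Vertices of the chain-of-triangles gadget: `Sum.inl i` is `u_i`, `Sum.inr i` is `ω_{i+1}`. -/
abbrev CV (n : ℕ) := Fin (n + 1) ⊕ Fin n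

/-- The bottom edge `{u_{i-1}, u_i}` of the `i`-th triangle (on the target path). -/
def botE (n : ℕ) (i : Fin n) : Sym2 (CV n) := s(Sum.inl i.castSucc, Sum.inl i.succ)

/-- The detour edge `{u_{i-1}, ω_i}` of the `i`-th triangle. -/
def d1E (n : ℕ) (i : Fin n) : Sym2 (CV n) := s(Sum.inl i.castSucc, Sum.inr i)

/-- The detour edge `{ω_i, u_i}` of the `i`-th triangle. -/
def d2E (n : ℕ) (i : Fin n) : Sym2 (CV n) := s(Sum.inr i, Sum.inl i.succ)

/-- The chain-of-triangles gadget graph. -/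
def chainGraph (n : ℕ) : SimpleGraph (CV n) :=
  SimpleGraph.fromEdgeSet {e | ∃ i : Fin n, e = botE n i ∨ e = d1E n i ∨ e = d2E n i}

/-- Source `s = u_0`. -/
def src (n : ℕ) : CV n := Sum.inl 0

/-- Destination `t = u_n`. -/
def dst (n : ℕ) : CV n := Sum.inl (Fin.last n)

/-- An attack on the chain gadget: removable edges lie in the graph, no bottom edge
(edge of `p*`) is removed, and afterwards every simple `s`–`t` path other than the bottom
path `p*` (i.e. any path visiting some detour vertex `ω_i`) is strictly longer than `p*`. -/
def IsChainAttack (n : ℕ) (w' : Sym2 (CV n) → ℝ) (E' : Finset (Sym2 (CV n))) : Prop :=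
  ↑E' ⊆ (chainGraph n).edgeSet ∧ (∀ i : Fin n, botE n i ∉ E') ∧
    ∀ q : ((chainGraph n).deleteEdges ↑E').Walk (src n) (dst n), q.IsPath →
      (∃ i : Fin n, Sum.inr i ∈ q.support) →
      ∑ i : Fin n, w' (botE n i) < walkLen w' q


lemma edge_at_omega {n : ℕ} {i : Fin n} {e : Sym2 (CV n)}
    (he : e ∈ (chainGraph n).edgeSet) (hi : (Sum.inr i : CV n) ∈ e) :
    e = d1E n i ∨ e = d2E n i := by
  rw [chainGraph, edgeSet_fromEdgeSet] at he
  obtain ⟨⟨j, hj⟩, -⟩ := he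
  rcases hj with rfl | rfl | rfl
  · simp [botE, Sym2.mem_iff] at hi
  · left
    simp only [d1E, Sym2.mem_iff] at hi
    rcases hi with hi | hi
    · exact absurd hi (by simp)
    · obtain rfl : i = j := Sum.inr.inj hi
      rfl
  · right
    simp only [d2E, Sym2.mem_iff] at hi
    rcases hi with hi | hi
    · obtain rfl : i = j := Sum.inr.inj hi
      rfl
    · exact absurd hi (by simp)

/-- An optimal (minimum-cost) attack on the chain gadget never removes both detour edges
of the same triangle. -/
theorem stmt4 (n : ℕ) (w' c : Sym2 (CV n) → ℝ) (ν : Fin n → ℝ)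
    (hw' : ∀ e, 0 < w' e) (hν : ∀ i, 0 < ν i)
    (hc1 : ∀ i, c (d1E n i) = ν i) (hc2 : ∀ i, c (d2E n i) = ν i)
    (E' : Finset (Sym2 (CV n))) (hE' : IsChainAttack n w' E')
    (hmin : ∀ F, IsChainAttack n w' F → ∑ e ∈ E', c e ≤ ∑ e ∈ F, c e) :
    ∀ i : Fin n, ¬(d1E n i ∈ E' ∧ d2E n i ∈ E') := by
  rintro i ⟨h1, h2⟩
  have hne : d1E n i ≠ d2E n i := by
    simp [d1E, d2E, Sym2.eq_iff, (Fin.castSucc_lt_succ : i.castSucc < i.succ).ne]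
  set F := E'.erase (d2E n i) with hF
  have hd1F : d1E n i ∈ F := Finset.mem_erase.2 ⟨hne, h1⟩
  obtain ⟨hsub, hbot, hpath⟩ := hE'
  have hFattack : IsChainAttack n w' F := by
    refine ⟨fun e he => hsub (Finset.erase_subset _ _ he),
      fun j hj => hbot j (Finset.erase_subset _ _ hj), ?_⟩
    rintro q hq ⟨j, hjsup⟩
    have key : ∀ x : CV n, ((chainGraph n).deleteEdges ↑F).Adj (Sum.inr i) x →
        s(Sum.inr i, x) = d2E n i := by
      intro x hx
      rw [SimpleGraph.deleteEdges_adj] at hx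
      rcases edge_at_omega (i := i) ((chainGraph n).mem_edgeSet.mpr hx.1) (Sym2.mem_mk_left _ _) with h' | h'
      · exact absurd (h' ▸ (Finset.mem_coe.2 hd1F)) hx.2
      · exact h'
    have homega : (Sum.inr i : CV n) ∉ q.support := by
      intro hmem
      have hspec := q.take_spec hmem
      set q1 := q.takeUntil _ hmem with hq1def
      set q2 := q.dropUntil _ hmem with hq2def
      have hq2nil : ¬ q2.Nil := Walk.not_nil_of_ne (by simp [dst])
      obtain ⟨a, ha, q2', hq2'⟩ := Walk.not_nil_iff.mp hq2nil
      have hq1nil : ¬ q1.reverse.Nil := Walk.not_nil_of_ne (by simp [src])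
      obtain ⟨b, hb, q1', hq1'⟩ := Walk.not_nil_iff.mp hq1nil
      have hea : s(Sum.inr i, a) ∈ q2.edges := by rw [hq2']; simp
      have heb : s(Sum.inr i, b) ∈ q1.edges := by
        have h' : s(Sum.inr i, b) ∈ q1.reverse.edges := by rw [hq1']; simp
        simpa using h'
      have hea' : d2E n i ∈ q2.edges := key a ha ▸ hea
      have heb' : d2E n i ∈ q1.edges := key b hb ▸ heb
      have hnodup : (q1.edges ++ q2.edges).Nodup := by
        rw [← Walk.edges_append, hspec]; exact hq.edges_nodup
      exact (List.nodup_append'.mp hnodup).2.2 heb' hea'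
    have htrans : ∀ e ∈ q.edges, e ∈ ((chainGraph n).deleteEdges ↑E').edgeSet := by
      intro e he
      have he' := q.edges_subset_edgeSet he
      rw [SimpleGraph.edgeSet_deleteEdges] at he' ⊢
      refine ⟨he'.1, fun heE => ?_⟩
      have hne2 : e ≠ d2E n i := by
        rintro rfl
        exact homega (q.fst_mem_support_of_mem_edges he)
      exact he'.2 (Finset.mem_coe.2 (Finset.mem_erase.2 ⟨hne2, heE⟩))
    have hineq := hpath (q.transfer _ htrans) (hq.transfer htrans)
      ⟨j, by rwa [Walk.support_transfer]⟩
    simpa only [walkLen, Walk.edges_transfer] using hineq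
  have hle := hmin F hFattack
  have hsum : ∑ e ∈ F, c e + c (d2E n i) = ∑ e ∈ E', c e := Finset.sum_erase_add E' c h2
  have := hc2 i
  have := hν i
  linarith
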